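/- If G₁ and G₂ are residually finite groups, then for the free product G = G₁ * G₂, the finite-residual satisfies G₁ ∩ G₀ = (G₁)₀ and G₂ ∩ G₀ = (G₂)₀, where X₀ denotes the intersection of all finite-index subgroups of X. In particular, a free product of residually finite groups is residually finite. -/

import Mathlib

/-- The finite residual of a group: the intersection of all its finite-index subgroups.
A group `G` is residually finite iff `finResidual G = ⊥`. -/
def finResidual (G : Type*) [Group G] : Subgroup G :=
  ⨅ (H : Subgroup G) (_ : H.index ≠ 0), H


namespace FinResAux

section Chart

variable {C X P : Type*} [Group C] [MulAction C P]

/-- Move points according to a chart into orbit coordinates. -/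
def chartFun (chart : X → Option P) (unchart : P → X) (c : C) (x : X) : X :=
  (chart x).elim x fun p => unchart (c • p)

theorem chartFun_one (chart : X → Option P) (unchart : P → X)
    (h1 : ∀ x p, chart x = some p → unchart p = x) (x : X) :
    chartFun chart unchart (1 : C) x = x := by
  unfold chartFun
  cases h : chart x with
  | none => rfl
  | some p => simpa using h1 x p h

theorem chartFun_comp (chart : X → Option P) (unchart : P → X)
    (h2 : ∀ p, chart (unchart p) = some p) (c c' : C) (x : X) :
    chartFun chart unchart c (chartFun chart unchart c' x)
      = chartFun chart unchart (c * c') x := by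
  unfold chartFun
  cases h : chart x with
  | none => simp [h]
  | some p => simp [h, h2 (c' • p), mul_smul]

/-- The permutation action defined by a chart. -/
def chartPerm (chart : X → Option P) (unchart : P → X)
    (h1 : ∀ x p, chart x = some p → unchart p = x)
    (h2 : ∀ p, chart (unchart p) = some p) : C →* Equiv.Perm X where
  toFun c :=
    { toFun := chartFun chart unchart c
      invFun := chartFun chart unchart c⁻¹
      left_inv := fun x => by
        rw [chartFun_comp chart unchart h2, inv_mul_cancel,
          chartFun_one chart unchart h1]
      right_inv := fun x => by
        rw [chartFun_comp chart unchart h2, mul_inv_cancel,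
          chartFun_one chart unchart h1] }
  map_one' := Equiv.ext fun x => chartFun_one chart unchart h1 x
  map_mul' c c' := Equiv.ext fun x => (chartFun_comp chart unchart h2 c c' x).symm

theorem chartPerm_apply (chart : X → Option P) (unchart : P → X)
    (h1 : ∀ x p, chart x = some p → unchart p = x)
    (h2 : ∀ p, chart (unchart p) = some p) (c : C) (x : X) :
    chartPerm chart unchart h1 h2 c x = chartFun chart unchart c x := rfl

end Chart

/-- A fiberwise action on a sigma type. -/
def sigmaMulAction {C : Type*} [Group C] {I : Type*} {Ω : I → Type*}
    [∀ i, MulAction C (Ω i)] : MulAction C (Σ i, Ω i) where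
  smul c p := ⟨p.1, c • p.2⟩
  one_smul p := by cases p with | mk i ω => show Sigma.mk i ((1 : C) • ω) = ⟨i, ω⟩; rw [one_smul]
  mul_smul c c' p := by
    cases p with
    | mk i ω => show Sigma.mk i ((c * c') • ω) = ⟨i, c • c' • ω⟩; rw [mul_smul]

end FinResAux

open Monoid

namespace FinResAux2

open scoped Classical

section Core

universe u

variable {F : Bool → Type u} [∀ b, Group (F b)]

/-- Cast along an equality of indices. -/
def castF {a b : Bool} (h : a = b) : F a →* F b := by subst h; exact MonoidHom.id _

theorem castF_self {a : Bool} (h : a = a) (x : F a) : castF h x = x := rfl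

variable {n : ℕ} (w : ℕ → Σ b, F b) (K : ∀ i : ℕ, Subgroup (F (w i).1))

/-- The finite set acted upon. -/
abbrev XT := Fin (n + 1) ⊕ Σ i : Fin n, F (w i.val).1 ⧸ K i.val

/-- Orbit coordinates for the action of `F b`. -/
abbrev PT (b : Bool) := Σ i : {i : Fin n // (w i.val).1 = b}, F (w i.1.val).1 ⧸ K i.1.val

instance actPT (b : Bool) : MulAction (F b) (PT (n := n) w K b) where
  smul c p := ⟨p.1, castF p.1.2.symm c • p.2⟩
  one_smul p := by
    rcases p with ⟨i, ω⟩
    exact congrArg (Sigma.mk i) (by rw [map_one, one_smul])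
  mul_smul c c' p := by
    rcases p with ⟨i, ω⟩
    exact congrArg (Sigma.mk i) (by rw [map_mul, mul_smul]; rfl)

theorem smul_PT {b : Bool} (c : F b) (i : {i : Fin n // (w i.val).1 = b})
    (ω : F (w i.1.val).1 ⧸ K i.1.val) :
    (c • (⟨i, ω⟩ : PT (n := n) w K b)) = ⟨i, castF i.2.symm c • ω⟩ := rfl

/-- The chart for the action of `F b`. -/
noncomputable def chart (b : Bool) : XT (n := n) w K → Option (PT (n := n) w K b)
  | .inl j =>
    if h : (j : ℕ) < n ∧ (w (j : ℕ)).1 = b then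
      some ⟨⟨⟨(j : ℕ), h.1⟩, h.2⟩, QuotientGroup.mk (w (j : ℕ)).2⟩
    else if h' : 0 < (j : ℕ) ∧ (w ((j : ℕ) - 1)).1 = b then
      some ⟨⟨⟨(j : ℕ) - 1, by have := j.isLt; omega⟩, h'.2⟩,
        QuotientGroup.mk (1 : F (w ((j : ℕ) - 1)).1)⟩
    else none
  | .inr ⟨i, ω⟩ =>
    if h : (w i.val).1 = b then
      if ω = QuotientGroup.mk 1 ∨ ω = QuotientGroup.mk (w i.val).2 then none
      else some ⟨⟨i, h⟩, ω⟩
    else none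

/-- The inverse chart. -/
noncomputable def unchart (b : Bool) : PT (n := n) w K b → XT (n := n) w K
  | ⟨⟨i, _⟩, ω⟩ =>
    if ω = QuotientGroup.mk 1 then .inl ⟨i.val + 1, by have := i.isLt; omega⟩
    else if ω = QuotientGroup.mk (w i.val).2 then .inl ⟨i.val, by have := i.isLt; omega⟩
    else .inr ⟨i, ω⟩

theorem chart_inl (b : Bool) (j : Fin (n + 1)) :
    chart (n := n) w K b (Sum.inl j) =
      (if h : (j : ℕ) < n ∧ (w (j : ℕ)).1 = b then
        some ⟨⟨⟨(j : ℕ), h.1⟩, h.2⟩, QuotientGroup.mk (w (j : ℕ)).2⟩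
      else if h' : 0 < (j : ℕ) ∧ (w ((j : ℕ) - 1)).1 = b then
        some ⟨⟨⟨(j : ℕ) - 1, by have := j.isLt; omega⟩, h'.2⟩,
          QuotientGroup.mk (1 : F (w ((j : ℕ) - 1)).1)⟩
      else none) := rfl

theorem chart_inr (b : Bool) (i : Fin n) (ω : F (w i.val).1 ⧸ K i.val) :
    chart (n := n) w K b (Sum.inr ⟨i, ω⟩) =
      (if h : (w i.val).1 = b then
        if ω = QuotientGroup.mk 1 ∨ ω = QuotientGroup.mk (w i.val).2 then none
        else some ⟨⟨i, h⟩, ω⟩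
      else none) := rfl

theorem unchart_mk (b : Bool) (i : Fin n) (hb : (w i.val).1 = b)
    (ω : F (w i.val).1 ⧸ K i.val) :
    unchart (n := n) w K b ⟨⟨i, hb⟩, ω⟩ =
      (if ω = QuotientGroup.mk 1 then Sum.inl ⟨i.val + 1, by have := i.isLt; omega⟩
      else if ω = QuotientGroup.mk (w i.val).2 then
        Sum.inl ⟨i.val, by have := i.isLt; omega⟩
      else Sum.inr ⟨i, ω⟩) := rfl

theorem mk_ne_mk_one (hKx : ∀ i < n, (w i).2 ∉ K i) {i : ℕ} (hi : i < n) :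
    (QuotientGroup.mk (w i).2 : F (w i).1 ⧸ K i) ≠ QuotientGroup.mk 1 := by
  intro h
  have h2 := QuotientGroup.eq.mp h
  rw [mul_one, (K i).inv_mem_iff] at h2
  exact hKx i hi h2

theorem chart_h1 (hKx : ∀ i < n, (w i).2 ∉ K i) (b : Bool) :
    ∀ x p, chart (n := n) w K b x = some p → unchart (n := n) w K b p = x := by
  rintro (j | ⟨i, ω⟩) p hp
  · rw [chart_inl] at hp
    by_cases hA : ((j : ℕ) < n ∧ (w (j : ℕ)).1 = b)
    · rw [dif_pos hA] at hp
      injection hp with hp; subst hp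
      rw [unchart_mk, if_neg (mk_ne_mk_one w K hKx hA.1), if_pos rfl]
      try exact congrArg Sum.inl (Fin.ext rfl)
    · rw [dif_neg hA] at hp
      by_cases hB : (0 < (j : ℕ) ∧ (w ((j : ℕ) - 1)).1 = b)
      · rw [dif_pos hB] at hp
        injection hp with hp; subst hp
        rw [unchart_mk, if_pos rfl]
        try exact congrArg Sum.inl (Fin.ext (by have := j.isLt; have := hB.1; simp; omega))
      · rw [dif_neg hB] at hp; cases hp
  · rw [chart_inr] at hp
    by_cases hA : (w i.val).1 = b
    · rw [dif_pos hA] at hp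
      by_cases hB : (ω = QuotientGroup.mk 1 ∨ ω = QuotientGroup.mk (w i.val).2)
      · rw [if_pos hB] at hp; cases hp
      · rw [if_neg hB] at hp
        injection hp with hp; subst hp
        push_neg at hB
        rw [unchart_mk, if_neg hB.1, if_neg hB.2]
    · rw [dif_neg hA] at hp; cases hp

theorem chart_h2 (hKx : ∀ i < n, (w i).2 ∉ K i)
    (halt : ∀ i, i + 1 < n → (w i).1 ≠ (w (i + 1)).1) (b : Bool) :
    ∀ p, chart (n := n) w K b (unchart (n := n) w K b p) = some p := by
  rintro ⟨⟨i, hb⟩, ω⟩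
  by_cases hω1 : ω = QuotientGroup.mk 1
  · subst hω1
    rw [unchart_mk, if_pos rfl, chart_inl,
      dif_neg (fun hc => halt i.val hc.1 (hb.trans hc.2.symm)),
      dif_pos ⟨Nat.succ_pos _, hb⟩]
    try rfl
  · by_cases hω2 : ω = QuotientGroup.mk (w i.val).2
    · subst hω2
      rw [unchart_mk, if_neg hω1, if_pos rfl, chart_inl, dif_pos ⟨i.isLt, hb⟩]
      try rfl
    · rw [unchart_mk, if_neg hω1, if_neg hω2, chart_inr,
        dif_pos hb, if_neg (not_or.mpr ⟨hω1, hω2⟩)]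

/-- The permutation representation of `F b`. -/
noncomputable def rho (hKx : ∀ i < n, (w i).2 ∉ K i)
    (halt : ∀ i, i + 1 < n → (w i).1 ≠ (w (i + 1)).1) (b : Bool) :
    F b →* Equiv.Perm (XT (n := n) w K) :=
  FinResAux.chartPerm (chart w K b) (unchart w K b) (chart_h1 w K hKx b)
    (chart_h2 w K hKx halt b)

/-- The permutation representation of the free product. -/
noncomputable def Phi (hKx : ∀ i < n, (w i).2 ∉ K i)
    (halt : ∀ i, i + 1 < n → (w i).1 ≠ (w (i + 1)).1) :
    CoprodI F →* Equiv.Perm (XT (n := n) w K) :=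
  CoprodI.lift (fun b => rho w K hKx halt b)

theorem Phi_step (hKx : ∀ i < n, (w i).2 ∉ K i)
    (halt : ∀ i, i + 1 < n → (w i).1 ≠ (w (i + 1)).1) (m : ℕ) (hm : m < n) :
    Phi w K hKx halt (CoprodI.of (w m).2) (Sum.inl ⟨m + 1, by omega⟩)
      = Sum.inl ⟨m, by omega⟩ := by
  rw [Phi, CoprodI.lift_of, rho, FinResAux.chartPerm_apply]
  have hc : chart (n := n) w K (w m).1 (Sum.inl ⟨m + 1, by omega⟩)
      = some ⟨⟨⟨m, hm⟩, rfl⟩, QuotientGroup.mk 1⟩ := by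
    rw [chart_inl, dif_neg (fun hc => halt m hc.1 hc.2.symm),
      dif_pos ⟨Nat.succ_pos _, rfl⟩]
    rfl
  rw [FinResAux.chartFun, hc]
  show unchart (n := n) w K (w m).1 ((w m).2 • ⟨⟨⟨m, hm⟩, rfl⟩, QuotientGroup.mk 1⟩) = _
  rw [smul_PT]
  have hsm : castF (F := F) (Eq.symm (rfl : (w (⟨m, hm⟩ : Fin n).val).1 = (w m).1)) (w m).2 •
      (QuotientGroup.mk 1 : F (w m).1 ⧸ K m) = QuotientGroup.mk (w m).2 := by
    rw [castF_self, MulAction.Quotient.smul_mk, smul_eq_mul, mul_one]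
  rw [hsm, unchart_mk, if_neg (mk_ne_mk_one w K hKx hm), if_pos rfl]

theorem Phi_chain (hKx : ∀ i < n, (w i).2 ∉ K i)
    (halt : ∀ i, i + 1 < n → (w i).1 ≠ (w (i + 1)).1) :
    ∀ k m (_ : m + k = n),
      Phi w K hKx halt ((List.ofFn (fun i : Fin n => CoprodI.of (w i.val).2)).drop m).prod
          (Sum.inl ⟨n, n.lt_succ_self⟩)
        = Sum.inl ⟨m, by omega⟩ := by
  intro k
  induction k with
  | zero =>
    intro m hm
    have hm' : m = n := by omega
    subst hm'
    rw [List.drop_eq_nil_of_le (by simp), List.prod_nil, map_one]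
    rfl
  | succ k ih =>
    intro m hm
    have hmn : m < n := by omega
    rw [List.drop_eq_getElem_cons (by simpa using hmn), List.getElem_ofFn,
      List.prod_cons, map_mul, Equiv.Perm.mul_apply, ih (m + 1) (by omega)]
    exact Phi_step w K hKx halt m hmn

theorem core_exists (hn : n ≠ 0) (hKi : ∀ i < n, (K i).index ≠ 0)
    (hKx : ∀ i < n, (w i).2 ∉ K i)
    (halt : ∀ i, i + 1 < n → (w i).1 ≠ (w (i + 1)).1) :
    ∃ H : Subgroup (CoprodI F), H.index ≠ 0 ∧
      (List.ofFn fun i : Fin n => CoprodI.of (w i.val).2).prod ∉ H := by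
  haveI : ∀ i : Fin n, Finite (F (w i.val).1 ⧸ K i.val) := fun i =>
    Nat.finite_of_card_ne_zero (by rw [← Subgroup.index_eq_card]; exact hKi i.val i.isLt)
  haveI : Finite (XT (n := n) w K) := inferInstance
  refine ⟨(Phi w K hKx halt).ker, ?_, ?_⟩
  · rw [Subgroup.index_ker]
    exact Nat.card_ne_zero.mpr ⟨inferInstance, inferInstance⟩
  · rw [MonoidHom.mem_ker]
    intro h
    have h2 := congrArg (fun σ : Equiv.Perm (XT (n := n) w K) =>
      σ (Sum.inl ⟨n, n.lt_succ_self⟩)) h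
    rw [show (List.ofFn fun i : Fin n => CoprodI.of (w i.val).2)
        = (List.ofFn fun i : Fin n => CoprodI.of (w i.val).2).drop 0 from rfl,
      Phi_chain w K hKx halt n 0 (by omega)] at h2
    rw [Equiv.Perm.one_apply] at h2
    have := congrArg (fun x : XT (n := n) w K =>
      match x with | Sum.inl j => (j : ℕ) | _ => 0) h2
    simp only at this
    omega

end Core

end FinResAux2

namespace FinResAux2

universe u

theorem sep_of_finResidual_eq_bot {H : Type*} [Group H] (h : finResidual H = ⊥)
    {y : H} (hy : y ≠ 1) : ∃ K : Subgroup H, K.index ≠ 0 ∧ y ∉ K := by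
  by_contra hcon
  push_neg at hcon
  apply hy
  have hmem : y ∈ finResidual H := Subgroup.mem_iInf.mpr fun K =>
    Subgroup.mem_iInf.mpr fun hK => hcon K hK
  rwa [h, Subgroup.mem_bot] at hmem

theorem finResidual_le {H : Type*} [Group H] {K : Subgroup H} (hK : K.index ≠ 0) :
    finResidual H ≤ K := le_trans (iInf_le _ K) (iInf_le _ hK)

theorem coprodI_finResidual {F : Bool → Type u} [∀ b, Group (F b)]
    (hres : ∀ b, finResidual (F b) = ⊥) : finResidual (Monoid.CoprodI F) = ⊥ := by
  classical
  rw [eq_bot_iff]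
  intro g hg
  rw [Subgroup.mem_bot]
  by_contra hg1
  set wd := Monoid.CoprodI.Word.equiv (M := F) g with hwddef
  have hprod : wd.prod = g := Monoid.CoprodI.Word.equiv.symm_apply_apply g
  set L := wd.toList with hLdef
  set n := L.length with hndef
  have hn : n ≠ 0 := by
    intro h0
    apply hg1
    rw [← hprod]
    have hL0 : L = [] := List.length_eq_zero_iff.mp h0
    rw [Monoid.CoprodI.Word.prod, ← hLdef, hL0]
    simp
  set wf : ℕ → Σ b, F b := fun m => if h : m < n then L.get ⟨m, h⟩ else ⟨true, 1⟩ with hwf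
  have hW : ∀ (m) (h : m < n), wf m = L.get ⟨m, h⟩ := fun m h => dif_pos h
  have halt : ∀ i, i + 1 < n → (wf i).1 ≠ (wf (i + 1)).1 := by
    intro i hi
    rw [hW i (by omega), hW (i + 1) hi]
    exact List.isChain_iff_getElem.mp wd.chain_ne i (by simp only [← hLdef, ← hndef]; omega)
  have hletters : ∀ i : ℕ, ∃ K : Subgroup (F (wf i).1),
      i < n → (K.index ≠ 0 ∧ (wf i).2 ∉ K) := by
    intro i
    by_cases hi : i < n
    · have hne : (wf i).2 ≠ 1 := by
        rw [hW i hi]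
        exact wd.ne_one _ (List.get_mem L ⟨i, hi⟩)
      obtain ⟨Ksub, hK1, hK2⟩ := sep_of_finResidual_eq_bot (hres (wf i).1) hne
      exact ⟨Ksub, fun _ => ⟨hK1, hK2⟩⟩
    · exact ⟨⊤, fun h => absurd h hi⟩
  choose K hK using hletters
  obtain ⟨H, hHi, hHx⟩ := core_exists wf K hn (fun i hi => (hK i hi).1)
    (fun i hi => (hK i hi).2) halt
  apply hHx
  have hofn : (List.ofFn fun i : Fin n => Monoid.CoprodI.of (wf i.val).2)
      = L.map fun l => Monoid.CoprodI.of l.2 := by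
    rw [← List.ofFn_getElem_eq_map]
    exact congrArg List.ofFn
      (funext fun i => congrArg (fun l : (Σ b, F b) => Monoid.CoprodI.of l.2) (hW i.val i.isLt))
  have hg2 : (List.ofFn fun i : Fin n => Monoid.CoprodI.of (wf i.val).2).prod = g := by
    rw [hofn]
    exact hprod
  rw [hg2]
  exact finResidual_le hHi hg

end FinResAux2

namespace FinResAux2

universe u v

/-- The `Bool`-indexed family for a binary free product. -/
def FB (G₁ : Type u) (G₂ : Type v) : Bool → Type (max u v) := fun b =>
  Bool.rec (ULift.{u} G₂) (ULift.{v} G₁) b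

instance FBgroup (G₁ : Type u) (G₂ : Type v) [Group G₁] [Group G₂] :
    ∀ b, Group (FB G₁ G₂ b) := fun b =>
  Bool.rec (motive := fun b => Group (FB G₁ G₂ b))
    (inferInstanceAs (Group (ULift G₂))) (inferInstanceAs (Group (ULift G₁))) b

variable {G₁ : Type u} {G₂ : Type v} [Group G₁] [Group G₂]

/-- The comparison map from the binary coproduct to the indexed one. -/
def phiH : Monoid.Coprod G₁ G₂ →* Monoid.CoprodI (FB G₁ G₂) :=
  Monoid.Coprod.lift
    ((Monoid.CoprodI.of (M := FB G₁ G₂) (i := true)).comp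
      (MulEquiv.ulift.symm : G₁ ≃* ULift G₁).toMonoidHom)
    ((Monoid.CoprodI.of (M := FB G₁ G₂) (i := false)).comp
      (MulEquiv.ulift.symm : G₂ ≃* ULift G₂).toMonoidHom)

/-- The comparison map back. -/
def psiH : Monoid.CoprodI (FB G₁ G₂) →* Monoid.Coprod G₁ G₂ :=
  Monoid.CoprodI.lift (fun b => Bool.rec
    (motive := fun b => FB G₁ G₂ b →* Monoid.Coprod G₁ G₂)
    (Monoid.Coprod.inr.comp (MulEquiv.ulift : ULift G₂ ≃* G₂).toMonoidHom)
    (Monoid.Coprod.inl.comp (MulEquiv.ulift : ULift G₁ ≃* G₁).toMonoidHom) b)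

theorem psiH_phiH (g : Monoid.Coprod G₁ G₂) : psiH (phiH g) = g := by
  have h : (psiH.comp (phiH (G₁ := G₁) (G₂ := G₂))) = MonoidHom.id _ := by
    apply Monoid.Coprod.hom_ext <;> ext x <;>
      simp only [phiH, psiH, MonoidHom.coe_comp, MonoidHom.comp_apply, MonoidHom.id_apply,
        Monoid.Coprod.lift_apply_inl, Monoid.Coprod.lift_apply_inr,
        Monoid.CoprodI.lift_of] <;> rfl
  exact DFunLike.congr_fun h g

theorem phiH_surj : Function.Surjective (phiH (G₁ := G₁) (G₂ := G₂)) := by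
  intro x
  induction x using Monoid.CoprodI.induction_on with
  | one => exact ⟨1, map_one _⟩
  | of b m =>
    cases b with
    | true =>
      exact ⟨Monoid.Coprod.inl m.down, by
        rw [phiH, Monoid.Coprod.lift_apply_inl]; rfl⟩
    | false =>
      exact ⟨Monoid.Coprod.inr m.down, by
        rw [phiH, Monoid.Coprod.lift_apply_inr]; rfl⟩
  | mul x y hx hy =>
    obtain ⟨a, rfl⟩ := hx
    obtain ⟨b, rfl⟩ := hy
    exact ⟨a * b, map_mul _ _ _⟩

theorem finResidual_mulEquiv {G : Type*} {H : Type*} [Group G] [Group H] (e : G ≃* H)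
    (h : finResidual H = ⊥) : finResidual G = ⊥ := by
  rw [eq_bot_iff]
  intro x hx
  rw [Subgroup.mem_bot]
  by_contra hx1
  have hex : e x ≠ 1 := fun hh => hx1 (by simpa using e.injective (hh.trans (map_one e).symm))
  obtain ⟨K, hKi, hKx⟩ := sep_of_finResidual_eq_bot h hex
  have hKc : (K.comap e.toMonoidHom).index ≠ 0 := by
    rw [Subgroup.index_comap_of_surjective K (f := e.toMonoidHom) e.surjective]; exact hKi
  exact hKx (Subgroup.mem_comap.mp (finResidual_le hKc hx))

theorem coprod_finResidual (h1 : finResidual G₁ = ⊥) (h2 : finResidual G₂ = ⊥) :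
    finResidual (Monoid.Coprod G₁ G₂) = ⊥ := by
  have hULift : ∀ b, finResidual (FB G₁ G₂ b) = ⊥ := by
    intro b
    cases b with
    | false => exact finResidual_mulEquiv MulEquiv.ulift h2
    | true => exact finResidual_mulEquiv MulEquiv.ulift h1
  have hI := coprodI_finResidual hULift
  rw [eq_bot_iff]
  intro g hg
  rw [Subgroup.mem_bot]
  by_contra hg1
  have hphi : phiH g ≠ 1 := fun h => hg1 (by rw [← psiH_phiH g, h, map_one])
  obtain ⟨H, hHi, hHx⟩ := sep_of_finResidual_eq_bot hI hphi
  have hKi : (H.comap phiH).index ≠ 0 := by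
    rw [Subgroup.index_comap_of_surjective H phiH_surj]; exact hHi
  exact hHx (Subgroup.mem_comap.mp (finResidual_le hKi hg))

end FinResAux2

/-- If `G₁` and `G₂` are residually finite, then in the free product `G = G₁ * G₂` the
finite residual satisfies `G₁ ∩ G₀ = (G₁)₀` and `G₂ ∩ G₀ = (G₂)₀`; in particular the free
product of residually finite groups is residually finite. -/
theorem finResidual_coprod {G₁ G₂ : Type*} [Group G₁] [Group G₂]
    (h1 : finResidual G₁ = ⊥) (h2 : finResidual G₂ = ⊥) :
    (finResidual (Monoid.Coprod G₁ G₂)).comap Monoid.Coprod.inl = finResidual G₁ ∧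
    (finResidual (Monoid.Coprod G₁ G₂)).comap Monoid.Coprod.inr = finResidual G₂ ∧
    finResidual (Monoid.Coprod G₁ G₂) = ⊥ := by

  have hmain : finResidual (Monoid.Coprod G₁ G₂) = ⊥ := FinResAux2.coprod_finResidual h1 h2
  refine ⟨?_, ?_, hmain⟩
  · rw [hmain, h1, MonoidHom.comap_bot, MonoidHom.ker_eq_bot_iff]
    intro a b hab
    simpa using congrArg Monoid.Coprod.fst hab
  · rw [hmain, h2, MonoidHom.comap_bot, MonoidHom.ker_eq_bot_iff]
    intro a b hab
    simpa using congrArg Monoid.Coprod.snd hab
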